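/- For all n ≥ 1, k ≥ 0, and τ ∈ {132, 213}, the number of permutations of [n] avoiding both 123 and τ and having exactly k crossings equals δ_{k,0} + C(n−1, k+1), where δ is the Kronecker delta and C denotes the binomial coefficient. -/

import Mathlib

open scoped Classical

/-- The number of crossings of a permutation: pairs (i,j) with
i < j < σ(i) < σ(j) or σ(i) < σ(j) ≤ i < j. -/
noncomputable def crs {n : ℕ} (σ : Equiv.Perm (Fin n)) : ℕ :=
  (Finset.univ.filter (fun p : Fin n × Fin n =>
    (p.1 < p.2 ∧ p.2 < σ p.1 ∧ σ p.1 < σ p.2) ∨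
    (σ p.1 < σ p.2 ∧ σ p.2 ≤ p.1 ∧ p.1 < p.2))).card

/-- Number of upper transients: i with σ⁻¹(i) < i < σ(i). -/
noncomputable def utCount {n : ℕ} (σ : Equiv.Perm (Fin n)) : ℕ :=
  (Finset.univ.filter (fun i : Fin n => σ.symm i < i ∧ i < σ i)).card

/-- Number of lower transients: i with σ(i) < i < σ⁻¹(i). -/
noncomputable def ltCount {n : ℕ} (σ : Equiv.Perm (Fin n)) : ℕ :=
  (Finset.univ.filter (fun i : Fin n => σ i < i ∧ i < σ.symm i)).card

/-- σ contains the pattern τ. -/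
def Contains {n k : ℕ} (σ : Equiv.Perm (Fin n)) (τ : Fin k → ℕ) : Prop :=
  ∃ f : Fin k → Fin n, StrictMono f ∧ ∀ x y, σ (f x) < σ (f y) ↔ τ x < τ y

/-- σ avoids the pattern τ. -/
def Avoids {n k : ℕ} (σ : Equiv.Perm (Fin n)) (τ : Fin k → ℕ) : Prop :=
  ¬ Contains σ τ

def p123 : Fin 3 → ℕ := ![1, 2, 3]
def p132 : Fin 3 → ℕ := ![1, 3, 2]
def p213 : Fin 3 → ℕ := ![2, 1, 3]
def p231 : Fin 3 → ℕ := ![2, 3, 1]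
def p312 : Fin 3 → ℕ := ![3, 1, 2]
def p321 : Fin 3 → ℕ := ![3, 2, 1]

/-- Generating polynomial of crs over permutations of [n] satisfying P. -/
noncomputable def Fpoly (n : ℕ) (P : Equiv.Perm (Fin n) → Prop) : Polynomial ℤ :=
  ∑ σ : Equiv.Perm (Fin n), if P σ then Polynomial.X ^ crs σ else 0


open Finset

lemma hockey (m k : ℕ) : (∑ s ∈ Finset.range m, Nat.choose s k) = Nat.choose m (k+1) := by
  induction m with
  | zero => simp
  | succ m ih => rw [Finset.sum_range_succ, ih, Nat.choose_succ_succ]; ring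

section Core
variable {m : ℕ} {c : ℕ → Finset ℕ}

/-- least index t with c t ⊆ S -/
noncomputable def theta (c : ℕ → Finset ℕ) (hex : ∀ S : Finset ℕ, ∃ t, c t ⊆ S)
    (S : Finset ℕ) : ℕ := Nat.find (hex S)

lemma c_antitone (hmono : ∀ t, c (t+1) ⊆ c t) : ∀ {a b : ℕ}, a ≤ b → c b ⊆ c a := by
  intro a b hab
  induction b with
  | zero => simp_all
  | succ b ih =>
    rcases Nat.lt_or_ge a (b+1) with h | h
    · exact (hmono b).trans (ih (by omega))
    · have : a = b + 1 := by omega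
      subst this; exact fun x hx => hx

lemma theta_le_iff (hex : ∀ S : Finset ℕ, ∃ t, c t ⊆ S)
    (hmono : ∀ t, c (t+1) ⊆ c t) (S : Finset ℕ) (t : ℕ) :
    theta c hex S ≤ t ↔ c t ⊆ S := by
  constructor
  · intro h
    exact (c_antitone hmono h).trans (Nat.find_spec (hex S))
  · intro h
    exact Nat.find_min' (hex S) h

lemma core_count (k : ℕ)
    (hex : ∀ S : Finset ℕ, ∃ t, c t ⊆ S)
    (h0 : c 0 = Finset.range m)
    (hmono : ∀ t, c (t+1) ⊆ c t)
    (hcard : ∀ t ≤ m, (c t).card = m - t) :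
    (((Finset.range m).powerset).filter (fun S =>
        (S \ c (theta c hex S - 1)).card = k)).card
      = (if k = 0 then 1 else 0) + Nat.choose m (k+1) := by
  have hsub : ∀ t, c t ⊆ Finset.range m := by
    intro t
    exact (c_antitone hmono (Nat.zero_le t)).trans (by rw [h0])
  have hthle : ∀ S : Finset ℕ, theta c hex S ≤ m := by
    intro S
    apply Nat.find_min'
    have : (c m).card = 0 := by rw [hcard m le_rfl]; omega
    simp [Finset.card_eq_zero.mp this]
  have hdiff : ∀ t, 1 ≤ t → t ≤ m → ∀ x ∈ c (t-1), x ∉ c t → ∀ y ∈ c (t-1), y ∉ c t → x = y := by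
    intro t h1 h2 x hx hx' y hy hy'
    have hsubc : c t ⊆ c (t-1) := c_antitone hmono (by omega)
    have hc1 : (c (t-1) \ c t).card = 1 := by
      rw [Finset.card_sdiff_of_subset hsubc, hcard t h2, hcard (t-1) (by omega)]; omega
    have hxm : x ∈ c (t-1) \ c t := Finset.mem_sdiff.mpr ⟨hx, hx'⟩
    have hym : y ∈ c (t-1) \ c t := Finset.mem_sdiff.mpr ⟨hy, hy'⟩
    rcases Finset.card_eq_one.mp hc1 with ⟨z, hz⟩
    rw [hz] at hxm hym
    simp at hxm hym; omega
  rw [Finset.card_eq_sum_card_fiberwise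
      (f := fun S => theta c hex S) (t := Finset.range (m+1))
      (fun S hS => Finset.mem_range.mpr (Nat.lt_succ_of_le (hthle S)))]
  rw [Finset.sum_range_succ']
  -- fiber at t = 0
  have fib0 : ((((Finset.range m).powerset).filter (fun S =>
        (S \ c (theta c hex S - 1)).card = k)).filter
        (fun S => theta c hex S = 0)).card = if k = 0 then 1 else 0 := by
    have : (((Finset.range m).powerset).filter (fun S =>
        (S \ c (theta c hex S - 1)).card = k)).filter
        (fun S => theta c hex S = 0) =
        if k = 0 then {Finset.range m} else ∅ := by
      ext S
      simp only [Finset.mem_filter, Finset.mem_powerset]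
      constructor
      · rintro ⟨⟨hS, hk⟩, hth⟩
        have hc0 : c 0 ⊆ S := by
          rw [← theta_le_iff hex hmono]; omega
        have hSeq : S = Finset.range m := by
          apply Finset.Subset.antisymm hS; rw [← h0]; exact hc0
        have : S \ c (theta c hex S - 1) = ∅ := by
          rw [hth]; simp only [Nat.zero_sub, h0, hSeq]; exact Finset.sdiff_self _
        rw [this] at hk; simp at hk
        rw [if_pos hk.symm]; simp [hSeq]
      · intro hS
        by_cases hk : k = 0
        · rw [if_pos hk] at hS; simp at hS
          subst hS
          have hth : theta c hex (Finset.range m) = 0 := by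
            have : theta c hex (Finset.range m) ≤ 0 := by
              rw [theta_le_iff hex hmono, h0]
            omega
          refine ⟨⟨le_rfl, ?_⟩, hth⟩
          rw [hth]; simp only [Nat.zero_sub, h0]
          rw [Finset.sdiff_self]; simp [hk]
        · rw [if_neg hk] at hS; simp at hS
    rw [this]
    split <;> simp
  rw [fib0]
  -- fibers at t+1
  have fibs : ∀ t, t < m → ((((Finset.range m).powerset).filter (fun S =>
        (S \ c (theta c hex S - 1)).card = k)).filter
        (fun S => theta c hex S = t + 1)).card = Nat.choose t k := by
    intro t ht
    have hT : ((Finset.range m) \ c t).card = t := by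
      rw [Finset.card_sdiff_of_subset (hsub t), Finset.card_range, hcard t (by omega)]; omega
    rw [show Nat.choose t k = (Finset.powersetCard k (Finset.range m \ c t)).card from by
      rw [Finset.card_powersetCard, hT]]
    apply Finset.card_bij' (i := fun S _ => S \ c t) (j := fun T _ => T ∪ c (t+1))
    · -- hi
      intro S hS
      simp only [Finset.mem_filter, Finset.mem_powerset] at hS
      obtain ⟨⟨hS1, hS2⟩, hS3⟩ := hS
      rw [Finset.mem_powersetCard]
      constructor
      · intro x hx
        simp only [Finset.mem_sdiff] at hx ⊢
        exact ⟨hS1 hx.1, hx.2⟩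
      · rw [hS3] at hS2
        simpa using hS2
    · -- hj
      intro T hT'
      rw [Finset.mem_powersetCard] at hT'
      obtain ⟨hT1, hT2⟩ := hT'
      have hTdisj : ∀ x ∈ T, x ∉ c t := fun x hx => (Finset.mem_sdiff.mp (hT1 hx)).2
      have hTrange : T ⊆ Finset.range m := fun x hx => (Finset.mem_sdiff.mp (hT1 hx)).1
      -- the missing element
      have hmiss : ∃ y ∈ c t, y ∉ c (t+1) := by
        by_contra h
        push_neg at h
        have : (c t).card ≤ (c (t+1)).card := Finset.card_le_card h
        rw [hcard t (by omega), hcard (t+1) (by omega)] at this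
        omega
      obtain ⟨y, hy1, hy2⟩ := hmiss
      have hyT : y ∉ T := fun h => hTdisj y h hy1
      have hth : theta c hex (T ∪ c (t+1)) = t + 1 := by
        have hle : theta c hex (T ∪ c (t+1)) ≤ t + 1 := by
          rw [theta_le_iff hex hmono]
          exact fun x hx => Finset.mem_union_right _ hx
        have hgt : ¬ (theta c hex (T ∪ c (t+1)) ≤ t) := by
          rw [theta_le_iff hex hmono]
          intro h
          have := h hy1
          rw [Finset.mem_union] at this
          tauto
        omega
      simp only [Finset.mem_filter, Finset.mem_powerset]
      refine ⟨⟨?_, ?_⟩, hth⟩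
      · exact Finset.union_subset hTrange ((hmono t).trans (hsub t))
      · rw [hth]
        have h1 : t + 1 - 1 = t := by omega
        rw [h1]
        have : (T ∪ c (t+1)) \ c t = T := by
          ext x
          simp only [Finset.mem_sdiff, Finset.mem_union]
          constructor
          · rintro ⟨h1 | h1, h2⟩
            · exact h1
            · exact absurd (hmono t h1) h2
          · intro hx
            exact ⟨Or.inl hx, hTdisj x hx⟩
        rw [this]; exact hT2
    · -- left inverse : (S \ c t) ∪ c (t+1) = S
      intro S hS
      simp only [Finset.mem_filter, Finset.mem_powerset] at hS
      obtain ⟨⟨hS1, _⟩, hS3⟩ := hS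
      have hct1 : c (t+1) ⊆ S := by
        rw [← theta_le_iff hex hmono]; omega
      have hnotct : ¬ (c t ⊆ S) := by
        rw [← theta_le_iff hex hmono]; omega
      ext x
      simp only [Finset.mem_union, Finset.mem_sdiff]
      constructor
      · rintro (⟨h1, _⟩ | h1)
        · exact h1
        · exact hct1 h1
      · intro hx
        by_cases hxc : x ∈ c t
        · right
          by_contra hxc1
          -- x ∈ c t \ c (t+1), x ∈ S ; missing element y ∈ c t \ S
          obtain ⟨y, hy1, hy2⟩ := Finset.not_subset.mp hnotct
          have hyc1 : y ∉ c (t+1) := fun h => hy2 (hct1 h)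
          have : x = y := hdiff (t+1) (by omega) (by omega) x (by simpa using hxc) hxc1 y (by simpa using hy1) hyc1
          subst this; exact hy2 hx
        · exact Or.inl ⟨hx, hxc⟩
    · -- right inverse : (T ∪ c (t+1)) \ c t = T
      intro T hT'
      rw [Finset.mem_powersetCard] at hT'
      obtain ⟨hT1, _⟩ := hT'
      have hTdisj : ∀ x ∈ T, x ∉ c t := fun x hx => (Finset.mem_sdiff.mp (hT1 hx)).2
      ext x
      simp only [Finset.mem_sdiff, Finset.mem_union]
      constructor
      · rintro ⟨h1 | h1, h2⟩
        · exact h1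
        · exact absurd (hmono t h1) h2
      · intro hx
        exact ⟨Or.inl hx, hTdisj x hx⟩
  have : ∀ t ∈ Finset.range m, ((((Finset.range m).powerset).filter (fun S =>
        (S \ c (theta c hex S - 1)).card = k)).filter
        (fun S => theta c hex S = t + 1)).card = Nat.choose t k := by
    intro t ht
    exact fibs t (Finset.mem_range.mp ht)
  rw [Finset.sum_congr rfl this, hockey]
  ring
end Core

section Construction
variable {n : ℕ}



/-- least a such that [a, i) ⊆ S -/
noncomputable def aS (S : Finset ℕ) (i : ℕ) : ℕ :=
  Nat.find (p := fun a => ∀ j, a ≤ j → j < i → j ∈ S)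
    ⟨i, fun j h1 h2 => absurd h2 (by omega)⟩

lemma aS_le (S : Finset ℕ) (i : ℕ) : aS S i ≤ i :=
  Nat.find_min' _ (fun j h1 h2 => absurd h2 (by omega))

lemma aS_spec (S : Finset ℕ) (i : ℕ) : ∀ j, aS S i ≤ j → j < i → j ∈ S :=
  Nat.find_spec (p := fun a => ∀ j, a ≤ j → j < i → j ∈ S) _

lemma aS_min (S : Finset ℕ) (i : ℕ) {a : ℕ} (h : ∀ j, a ≤ j → j < i → j ∈ S) :
    aS S i ≤ a := Nat.find_min' _ h

lemma aS_pred (S : Finset ℕ) (i : ℕ) (h : 1 ≤ aS S i) : aS S i - 1 ∉ S := by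
  have hmin : ¬ (∀ j, aS S i - 1 ≤ j → j < i → j ∈ S) :=
    Nat.find_min (p := fun a => ∀ j, a ≤ j → j < i → j ∈ S)
      (⟨i, fun j h1 h2 => absurd h2 (by omega)⟩)
      (show aS S i - 1 < aS S i by omega)
  push_neg at hmin
  obtain ⟨j, hj1, hj2, hj3⟩ := hmin
  have : j = aS S i - 1 := by
    by_contra hne
    exact hj3 (aS_spec S i j (by omega) hj2)
  rwa [← this]

lemma aS_pred_lt (S : Finset ℕ) (i : ℕ) (h : 1 ≤ aS S i) : aS S i - 1 < i := by
  have := aS_le S i; omega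

/-- the value of our permutation at position i -/
noncomputable def pval (n : ℕ) (S : Finset ℕ) (i : ℕ) : ℕ :=
  if i ∈ S then n - 2 - i else n - 1 - aS S i

noncomputable def fS (n : ℕ) (S : Finset ℕ) : Fin n → Fin n :=
  fun i => ⟨pval n S i.val, by
    have := i.isLt; unfold pval; split <;> omega⟩

lemma fS_inj (S : Finset ℕ) (hS : S ⊆ Finset.range (n-1)) :
    Function.Injective (fS n S) := by
  intro i j hij
  have hval : pval n S i.val = pval n S j.val := congrArg Fin.val hij
  have hi := i.isLt
  have hj := j.isLt
  -- generic helper: in all cases conclude vals equal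
  have key : ∀ x y : ℕ, x < n → y < n → x < y → pval n S x = pval n S y → False := by
    intro x y hx hy hxy heq
    have hax := aS_le S x
    have hay := aS_le S y
    unfold pval at heq
    by_cases hxS : x ∈ S <;> by_cases hyS : y ∈ S
    · have hx1 : x < n - 1 := Finset.mem_range.mp (hS hxS)
      have hy1 : y < n - 1 := Finset.mem_range.mp (hS hyS)
      rw [if_pos hxS, if_pos hyS] at heq; omega
    · -- x ∈ S, y ∉ S : n-2-x = n-1-aS y ⟹ aS y = x+1, pred = x ∉ S contra
      rw [if_pos hxS, if_neg hyS] at heq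
      have hx1 : x < n - 1 := Finset.mem_range.mp (hS hxS)
      have hay1 : aS S y = x + 1 := by omega
      have := aS_pred S y (by omega)
      rw [hay1] at this
      simp at this
      exact this hxS
    · -- x ∉ S, y ∈ S : n-1-aS x ≥ n-1-x > n-2-y
      rw [if_neg hxS, if_pos hyS] at heq
      have hy1 : y < n - 1 := Finset.mem_range.mp (hS hyS)
      omega
    · -- both ∉ S : aS y > x since x ∉ S
      rw [if_neg hxS, if_neg hyS] at heq
      have haxy : x < aS S y := by
        by_contra hcon
        exact hxS (aS_spec S y x (by omega) hxy)
      omega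
  rcases Nat.lt_trichotomy i.val j.val with h | h | h
  · exact absurd (key i.val j.val hi hj h hval) (fun x => x)
  · exact Fin.ext h
  · exact absurd (key j.val i.val hj hi h hval.symm) (fun x => x)

/-- the permutation associated to S (junk value when S not in range) -/
noncomputable def permS (n : ℕ) (S : Finset ℕ) : Equiv.Perm (Fin n) :=
  if h : S ⊆ Finset.range (n-1) then
    Equiv.ofBijective (fS n S) (Finite.injective_iff_bijective.mp (fS_inj S h))
  else 1

lemma permS_val (S : Finset ℕ) (hS : S ⊆ Finset.range (n-1)) (i : Fin n) :
    ((permS n S) i : ℕ) = pval n S i.val := by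
  unfold permS
  rw [dif_pos hS]
  rfl

lemma permS_fam (S : Finset ℕ) (hS : S ⊆ Finset.range (n-1)) (i : Fin n) :
    n ≤ ((permS n S) i : ℕ) + i.val + 2 := by
  rw [permS_val S hS]
  unfold pval
  have := aS_le S i.val
  split
  · next h => have := Finset.mem_range.mp (hS h); omega
  · omega



/-- the set of positions where σ sits on the low antidiagonal -/
noncomputable def Sof (n : ℕ) (σ : Equiv.Perm (Fin n)) : Finset ℕ :=
  (Finset.univ.filter (fun i : Fin n => (σ i : ℕ) + i.val + 2 = n)).image Fin.val

lemma mem_Sof {σ : Equiv.Perm (Fin n)} {i : ℕ} :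
    i ∈ Sof n σ ↔ ∃ h : i < n, (σ ⟨i, h⟩ : ℕ) + i + 2 = n := by
  unfold Sof
  simp only [Finset.mem_image, Finset.mem_filter, Finset.mem_univ, true_and]
  constructor
  · rintro ⟨p, hp, rfl⟩
    exact ⟨p.isLt, by simpa using hp⟩
  · rintro ⟨h, hp⟩
    exact ⟨⟨i, h⟩, hp, rfl⟩

lemma Sof_subset (σ : Equiv.Perm (Fin n)) : Sof n σ ⊆ Finset.range (n-1) := by
  intro i hi
  rw [mem_Sof] at hi
  obtain ⟨h, hp⟩ := hi
  rw [Finset.mem_range]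
  omega

/-- aS is unchanged / jumps according to membership -/
lemma aS_succ_mem (S : Finset ℕ) (i : ℕ) (h : i ∈ S) : aS S (i+1) = aS S i := by
  apply le_antisymm
  · apply aS_min
    intro j hj1 hj2
    rcases Nat.lt_or_ge j i with h' | h'
    · exact aS_spec S i j hj1 h'
    · have : j = i := by omega
      rwa [this]
  · apply aS_min
    intro j hj1 hj2
    exact aS_spec S (i+1) j hj1 (by omega)

lemma aS_succ_not_mem (S : Finset ℕ) (i : ℕ) (h : i ∉ S) : aS S (i+1) = i + 1 := by
  apply le_antisymm (aS_le S (i+1))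
  by_contra hc
  push_neg at hc
  exact h (aS_spec S (i+1) i (by omega) (by omega))

/-- structure lemma: any family permutation has the canonical form -/
lemma fam_pval (σ : Equiv.Perm (Fin n)) (hσ : ∀ i : Fin n, n ≤ (σ i : ℕ) + i.val + 2) :
    ∀ i : Fin n, (σ i : ℕ) = pval n (Sof n σ) i.val := by
  set S := Sof n σ with hSdef
  -- the invariant
  have INV : ∀ i, i ≤ n - 1 → ∀ v, v < n →
      ((∃ p : Fin n, p.val < i ∧ (σ p : ℕ) = v) ↔
        (n - 1 - i ≤ v ∧ v ≠ n - 1 - aS S i)) := by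
    intro i
    induction i with
    | zero =>
      intro _ v hv
      constructor
      · rintro ⟨p, hp, _⟩; omega
      · rintro ⟨h1, h2⟩
        have ha : aS S 0 = 0 := by have := aS_le S 0; omega
        rw [ha] at h2
        omega
    | succ i ih =>
      intro hi1 v hv
      have hin : i < n := by omega
      have ihi := ih (by omega)
      -- pointwise value at i
      have hilow : (σ ⟨i, hin⟩ : ℕ) + i + 2 ≥ n := hσ ⟨i, hin⟩
      have hpt : (σ ⟨i, hin⟩ : ℕ) = pval n S i := by
        by_cases hiS : i ∈ S
        · rw [mem_Sof] at hiS
          obtain ⟨h', hp⟩ := hiS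
          unfold pval
          rw [if_pos]
          · omega
          · rw [hSdef, mem_Sof]; exact ⟨h', hp⟩
        · -- i ∉ S: σ i ≥ n-1-i and use INV i at v = σ i
          have hne : (σ ⟨i, hin⟩ : ℕ) + i + 2 ≠ n := by
            intro h
            exact hiS (mem_Sof.mpr ⟨hin, h⟩)
          have hge : (σ ⟨i, hin⟩ : ℕ) ≥ n - 1 - i := by omega
          have hnlt : ¬ ∃ p : Fin n, p.val < i ∧ (σ p : ℕ) = (σ ⟨i, hin⟩ : ℕ) := by
            rintro ⟨p, hp1, hp2⟩
            have : p = ⟨i, hin⟩ := σ.injective (Fin.ext hp2)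
            rw [this] at hp1
            simp at hp1
          rw [ihi (σ ⟨i, hin⟩ : ℕ) (σ ⟨i, hin⟩).isLt] at hnlt
          push_neg at hnlt
          have := hnlt hge
          unfold pval
          rw [if_neg hiS]
          exact this
      -- now the invariant at i+1
      constructor
      · rintro ⟨p, hp1, hp2⟩
        rcases Nat.lt_or_ge p.val i with h' | h'
        · have := (ihi v hv).mp ⟨p, h', hp2⟩
          by_cases hiS : i ∈ S
          · rw [aS_succ_mem S i hiS] at *
            have hilt : i < n - 1 := Finset.mem_range.mp (Sof_subset σ (hSdef ▸ hiS))
            have := aS_le S i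
            constructor
            · omega
            · omega
          · rw [aS_succ_not_mem S i hiS]
            have := aS_le S i
            constructor <;> omega
        · have hpi : p.val = i := by omega
          have hpeq : p = ⟨i, hin⟩ := Fin.ext hpi
          rw [hpeq] at hp2
          rw [hpt] at hp2
          unfold pval at hp2
          by_cases hiS : i ∈ S
          · rw [if_pos hiS] at hp2
            rw [aS_succ_mem S i hiS]
            have hilt : i < n - 1 := Finset.mem_range.mp (Sof_subset σ (hSdef ▸ hiS))
            have := aS_le S i
            constructor <;> omega
          · rw [if_neg hiS] at hp2
            rw [aS_succ_not_mem S i hiS]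
            have := aS_le S i
            constructor <;> omega
      · rintro ⟨h1, h2⟩
        by_cases hiS : i ∈ S
        · rw [aS_succ_mem S i hiS] at h2
          have hilt : i < n - 1 := Finset.mem_range.mp (Sof_subset σ (hSdef ▸ hiS))
          rcases Nat.lt_or_ge v (n - 1 - i) with h' | h'
          · -- v = n-2-i = value at i
            have hveq : v = n - 2 - i := by omega
            refine ⟨⟨i, hin⟩, by simpa using Nat.lt_succ_self i, ?_⟩
            rw [hpt]
            unfold pval
            rw [if_pos hiS]
            omega
          · obtain ⟨p, hp1, hp2⟩ := (ihi v hv).mpr ⟨h', h2⟩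
            exact ⟨p, by omega, hp2⟩
        · rw [aS_succ_not_mem S i hiS] at h2
          have := aS_le S i
          rcases Nat.lt_or_ge v (n - 1 - i) with h' | h'
          · -- v ≥ n-1-(i+1) = n-2-i and v ≠ n-2-i gives contradiction unless...
            omega
          · -- v ≥ n-1-i : either v = n-1-aS i (value at i) or from INV i
            by_cases hv2 : v = n - 1 - aS S i
            · refine ⟨⟨i, hin⟩, by simpa using Nat.lt_succ_self i, ?_⟩
              rw [hpt]
              unfold pval
              rw [if_neg hiS]
              omega
            · obtain ⟨p, hp1, hp2⟩ := (ihi v hv).mpr ⟨h', hv2⟩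
              exact ⟨p, by omega, hp2⟩
  -- conclude pointwise for every i
  intro i
  have hin := i.isLt
  by_cases hiS : i.val ∈ S
  · rw [mem_Sof] at hiS
    obtain ⟨h', hp⟩ := hiS
    unfold pval
    rw [if_pos]
    · have : (⟨i.val, h'⟩ : Fin n) = i := Fin.ext rfl
      rw [this] at hp
      omega
    · rw [hSdef, mem_Sof]
      exact ⟨h', by simpa using hp⟩
  · have hne : (σ i : ℕ) + i.val + 2 ≠ n := by
      intro h
      exact hiS (hSdef ▸ mem_Sof.mpr ⟨hin, by simpa using h⟩)
    have hilow := hσ i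
    have hge : (σ i : ℕ) ≥ n - 1 - i.val := by omega
    have hnlt : ¬ ∃ p : Fin n, p.val < i.val ∧ (σ p : ℕ) = (σ i : ℕ) := by
      rintro ⟨p, hp1, hp2⟩
      have : p = i := σ.injective (Fin.ext hp2)
      rw [this] at hp1
      simp at hp1
    rw [INV i.val (by omega) (σ i : ℕ) (σ i).isLt] at hnlt
    push_neg at hnlt
    have := hnlt hge
    unfold pval
    rw [if_neg hiS]
    exact this



lemma Sof_permS (S : Finset ℕ) (hS : S ⊆ Finset.range (n-1)) :
    Sof n (permS n S) = S := by
  ext i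
  rw [mem_Sof]
  constructor
  · rintro ⟨h, hp⟩
    rw [permS_val S hS] at hp
    simp only [Fin.val_mk] at hp  -- pval n S i + i + 2 = n
    unfold pval at hp
    by_contra hiS
    rw [if_neg hiS] at hp
    have := aS_le S i
    omega
  · intro hiS
    have hi : i < n - 1 := Finset.mem_range.mp (hS hiS)
    refine ⟨by omega, ?_⟩
    rw [permS_val S hS]
    simp only [Fin.val_mk]
    unfold pval
    rw [if_pos hiS]
    omega

lemma permS_Sof (σ : Equiv.Perm (Fin n)) (hσ : ∀ i : Fin n, n ≤ (σ i : ℕ) + i.val + 2) :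
    permS n (Sof n σ) = σ := by
  apply Equiv.ext
  intro i
  apply Fin.ext
  rw [permS_val _ (Sof_subset σ)]
  exact (fam_pval σ hσ i).symm

end Construction

section Helpers
variable {n : ℕ}

lemma card_filter_ge (c : ℕ) [DecidablePred (fun v : Fin n => c ≤ v.val)] :
    (Finset.univ.filter (fun v : Fin n => c ≤ v.val)).card = n - c := by
  rw [show n - c = (Finset.Ico c n).card from by rw [Nat.card_Ico]]
  apply Finset.card_bij (i := fun v _ => v.val)
  · intro v hv
    simp only [Finset.mem_filter, Finset.mem_univ, true_and] at hv
    rw [Finset.mem_Ico]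
    exact ⟨hv, v.isLt⟩
  · intro a ha b hb hab
    exact Fin.ext hab
  · intro b hb
    rw [Finset.mem_Ico] at hb
    exact ⟨⟨b, hb.2⟩, by simp [hb.1], rfl⟩

lemma card_filter_fin {P : Fin n → Prop} [DecidablePred P] {Q : ℕ → Prop}
    (hPQ : ∀ v : Fin n, P v ↔ Q v.val) (c : ℕ) (hc : c ≤ n)
    (hQ : ∀ x < n, (Q x ↔ x < c)) :
    (Finset.univ.filter P).card = c := by
  rw [show c = (Finset.Ico 0 c).card from by rw [Nat.card_Ico]; omega]
  apply Finset.card_bij (i := fun v _ => v.val)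
  · intro v hv
    simp only [Finset.mem_filter, Finset.mem_univ, true_and] at hv
    rw [Finset.mem_Ico]
    have := (hQ v.val v.isLt).mp ((hPQ v).mp hv)
    omega
  · intro a _ b _ hab
    exact Fin.ext hab
  · intro b hb
    rw [Finset.mem_Ico] at hb
    refine ⟨⟨b, by omega⟩, ?_, rfl⟩
    simp only [Finset.mem_filter, Finset.mem_univ, true_and]
    rw [hPQ]
    exact (hQ b (by omega)).mpr hb.2

lemma card_filter_fin' {P : Fin n → Prop} [DecidablePred P] {Q : ℕ → Prop}
    (hPQ : ∀ v : Fin n, P v ↔ Q v.val) (c : ℕ) (hc : c ≤ n)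
    (hQ : ∀ x < n, (Q x ↔ c ≤ x)) :
    (Finset.univ.filter P).card = n - c := by
  rw [show n - c = (Finset.Ico c n).card from by rw [Nat.card_Ico]]
  apply Finset.card_bij (i := fun v _ => v.val)
  · intro v hv
    simp only [Finset.mem_filter, Finset.mem_univ, true_and] at hv
    rw [Finset.mem_Ico]
    exact ⟨(hQ v.val v.isLt).mp ((hPQ v).mp hv), v.isLt⟩
  · intro a _ b _ hab
    exact Fin.ext hab
  · intro b hb
    rw [Finset.mem_Ico] at hb
    refine ⟨⟨b, hb.2⟩, ?_, rfl⟩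
    simp only [Finset.mem_filter, Finset.mem_univ, true_and]
    rw [hPQ]
    exact (hQ b hb.2).mpr hb.1

/-- counting values of a permutation: #{p : Q (σ p)} = #{v : Q v} expressed via Ico -/
lemma card_filter_perm_fin {σ : Equiv.Perm (Fin n)} {P : Fin n → Prop} [DecidablePred P]
    {Q : ℕ → Prop} (hPQ : ∀ p : Fin n, P p ↔ Q (σ p).val) (c : ℕ) (hc : c ≤ n)
    (hQ : ∀ x < n, (Q x ↔ c ≤ x)) :
    (Finset.univ.filter P).card = n - c := by
  rw [show n - c = (Finset.Ico c n).card from by rw [Nat.card_Ico]]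
  apply Finset.card_bij (i := fun p _ => (σ p).val)
  · intro p hp
    simp only [Finset.mem_filter, Finset.mem_univ, true_and] at hp
    rw [Finset.mem_Ico]
    exact ⟨(hQ _ (σ p).isLt).mp ((hPQ p).mp hp), (σ p).isLt⟩
  · intro a _ b _ hab
    exact σ.injective (Fin.ext hab)
  · intro b hb
    rw [Finset.mem_Ico] at hb
    refine ⟨σ.symm ⟨b, hb.2⟩, ?_, by simp⟩
    simp only [Finset.mem_filter, Finset.mem_univ, true_and]
    rw [hPQ]
    simp only [Equiv.apply_symm_apply]
    exact (hQ b hb.2).mpr hb.1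

lemma card_filter_perm_fin_lt {σ : Equiv.Perm (Fin n)} {P : Fin n → Prop} [DecidablePred P]
    {Q : ℕ → Prop} (hPQ : ∀ p : Fin n, P p ↔ Q (σ p).val) (c : ℕ) (hc : c ≤ n)
    (hQ : ∀ x < n, (Q x ↔ x < c)) :
    (Finset.univ.filter P).card = c := by
  rw [show c = (Finset.Ico 0 c).card from by rw [Nat.card_Ico]; omega]
  apply Finset.card_bij (i := fun p _ => (σ p).val)
  · intro p hp
    simp only [Finset.mem_filter, Finset.mem_univ, true_and] at hp
    rw [Finset.mem_Ico]
    have := (hQ _ (σ p).isLt).mp ((hPQ p).mp hp)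
    omega
  · intro a _ b _ hab
    exact σ.injective (Fin.ext hab)
  · intro b hb
    rw [Finset.mem_Ico] at hb
    refine ⟨σ.symm ⟨b, by omega⟩, ?_, by simp⟩
    simp only [Finset.mem_filter, Finset.mem_univ, true_and]
    rw [hPQ]
    simp only [Equiv.apply_symm_apply]
    exact (hQ b (by omega)).mpr hb.2


lemma iff3 (σ : Equiv.Perm (Fin n)) (τ : Fin 3 → ℕ) (i j k : Fin n)
    (h01 : σ i < σ j ↔ τ 0 < τ 1) (h02 : σ i < σ k ↔ τ 0 < τ 2)
    (h12 : σ j < σ k ↔ τ 1 < τ 2) (h10 : σ j < σ i ↔ τ 1 < τ 0)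
    (h20 : σ k < σ i ↔ τ 2 < τ 0) (h21 : σ k < σ j ↔ τ 2 < τ 1) :
    ∀ x y : Fin 3, σ (![i,j,k] x) < σ (![i,j,k] y) ↔ τ x < τ y := by
  intro x y
  fin_cases x <;> fin_cases y <;> simp_all

lemma contains_of (σ : Equiv.Perm (Fin n)) (τ : Fin 3 → ℕ) {i j k : Fin n}
    (h1 : i < j) (h2 : j < k)
    (hiff : ∀ x y : Fin 3, σ (![i,j,k] x) < σ (![i,j,k] y) ↔ τ x < τ y) :
    Contains σ τ := by
  refine ⟨![i,j,k], ?_, hiff⟩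
  intro a b hab
  fin_cases a <;> fin_cases b <;> simp_all <;>
    first
      | exact h1
      | exact h2
      | exact h1.trans h2

end Helpers

section Char
variable {n : ℕ}

lemma avoids132_iff (σ : Equiv.Perm (Fin n)) :
    (Avoids σ p123 ∧ Avoids σ p132) ↔ ∀ i : Fin n, n ≤ (σ i : ℕ) + i.val + 2 := by
  constructor
  · intro ⟨h123, h132⟩
    by_contra hc
    push_neg at hc
    obtain ⟨i, hi⟩ := hc
    set V := Finset.univ.filter (fun p : Fin n => i < p ∧ σ i < σ p) with hV
    have hVcard : 2 ≤ V.card := by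
      have hbig : (Finset.univ.filter (fun p : Fin n => σ i < σ p)).card
          = n - ((σ i : ℕ) + 1) :=
        card_filter_perm_fin (σ := σ) (Q := fun x => (σ i : ℕ) + 1 ≤ x)
          (fun p => by rw [Fin.lt_def]; constructor <;> omega)
          ((σ i : ℕ) + 1) (by have := (σ i).isLt; omega) (fun x _ => Iff.rfl)
      set Vbig := Finset.univ.filter (fun p : Fin n => σ i < σ p) with hVbig
      have hsplit := Finset.card_sdiff_add_card_inter Vbig
        (Finset.univ.filter (fun p : Fin n => p.val ≤ i.val))
      have hsub1 : Vbig \ (Finset.univ.filter (fun p : Fin n => p.val ≤ i.val)) ⊆ V := by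
        intro p hp
        rw [Finset.mem_sdiff, hVbig, Finset.mem_filter, Finset.mem_filter] at hp
        rw [hV, Finset.mem_filter]
        refine ⟨Finset.mem_univ _, ?_, hp.1.2⟩
        have hnot : ¬ (p.val ≤ i.val) := by
          intro hle
          exact hp.2 ⟨Finset.mem_univ p, hle⟩
        rw [Fin.lt_def]
        omega
      have hsub2 : Vbig ∩ (Finset.univ.filter (fun p : Fin n => p.val ≤ i.val)) ⊆
          (Finset.univ.filter (fun p : Fin n => p.val ≤ i.val)).erase i := by
        intro p hp
        simp only [Finset.mem_inter, Finset.mem_filter, Finset.mem_univ, true_and, hVbig] at hp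
        rw [Finset.mem_erase]
        refine ⟨?_, by simp only [Finset.mem_filter, Finset.mem_univ, true_and]; exact hp.2⟩
        intro h
        rw [h] at hp
        exact absurd hp.1 (lt_irrefl _)
      have hcard2 : (Finset.univ.filter (fun p : Fin n => p.val ≤ i.val)).card = i.val + 1 :=
        card_filter_fin (Q := fun x => x ≤ i.val) (fun v => Iff.rfl) (i.val + 1)
          (by have := i.isLt; omega) (fun x _ => by omega)
      have h1 := Finset.card_le_card hsub1
      have h2 := Finset.card_le_card hsub2
      rw [Finset.card_erase_of_mem (by simp), hcard2] at h2
      rw [hbig] at hsplit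
      omega
    obtain ⟨j, hj, k, hk, hjk⟩ := Finset.one_lt_card.mp hVcard
    simp only [hV, Finset.mem_filter, Finset.mem_univ, true_and] at hj hk
    have key : ∀ a b : Fin n, (i < a ∧ σ i < σ a) → (i < b ∧ σ i < σ b) → a < b → False := by
      intro a b ha hb hab
      have h1 : (σ i).val < (σ a).val := Fin.lt_def.mp ha.2
      have h2 : (σ i).val < (σ b).val := Fin.lt_def.mp hb.2
      have hne : (σ a).val ≠ (σ b).val := fun h => by
        have : a = b := σ.injective (Fin.ext h)
        rw [this] at hab; exact absurd hab (lt_irrefl _)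
      rcases Nat.lt_or_ge (σ a).val (σ b).val with h3 | h3
      · apply h123
        apply contains_of σ p123 ha.1 hab
        apply iff3 σ p123 i a b
        · exact iff_of_true ha.2 (by norm_num [p123])
        · exact iff_of_true hb.2 (by decide)
        · exact iff_of_true (Fin.lt_def.mpr h3) (by decide)
        · exact iff_of_false (by rw [Fin.lt_def]; omega) (by norm_num [p123])
        · exact iff_of_false (by rw [Fin.lt_def]; omega) (by decide)
        · exact iff_of_false (by rw [Fin.lt_def]; omega) (by decide)
      · have h3' : (σ b).val < (σ a).val := by omega
        apply h132
        apply contains_of σ p132 ha.1 hab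
        apply iff3 σ p132 i a b
        · exact iff_of_true ha.2 (by norm_num [p132])
        · exact iff_of_true hb.2 (by decide)
        · exact iff_of_false (by rw [Fin.lt_def]; omega) (by decide)
        · exact iff_of_false (by rw [Fin.lt_def]; omega) (by norm_num [p132])
        · exact iff_of_false (by rw [Fin.lt_def]; omega) (by decide)
        · exact iff_of_true (Fin.lt_def.mpr h3') (by decide)
    rcases lt_trichotomy j k with h | h | h
    · exact key j k hj hk h
    · exact hjk h
    · exact key k j hk hj h
  · intro hfam
    constructor <;> rintro ⟨f, hmono, hiff⟩ <;>
    · set i := f 0 with hidef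
      set j := f 1 with hjdef
      set k := f 2 with hkdef
      have hij : i < j := hmono (show (0 : Fin 3) < 1 by decide)
      have hjk : j < k := hmono (show (1 : Fin 3) < 2 by decide)
      have hσij : σ i < σ j := by
        rw [hidef, hjdef, hiff]; decide
      have hσik : σ i < σ k := by
        rw [hidef, hkdef, hiff]; decide
      have hival : i.val + 3 ≤ n := by
        have h1 : i.val < j.val := Fin.lt_def.mp hij
        have h2 : j.val < k.val := Fin.lt_def.mp hjk
        have := k.isLt
        omega
      set U := Finset.univ.filter (fun p : Fin n => n - 2 - i.val ≤ (σ p).val) with hU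
      have hUcard : U.card = i.val + 2 := by
        have : U.card = n - (n - 2 - i.val) :=
          card_filter_perm_fin (σ := σ) (Q := fun x => n - 2 - i.val ≤ x)
            (fun p => Iff.rfl) (n - 2 - i.val) (by omega) (fun x _ => Iff.rfl)
        omega
      set L := (Finset.univ.filter (fun p : Fin n => p.val ≤ i.val)) with hL
      have hLcard : L.card = i.val + 1 :=
        card_filter_fin (Q := fun x => x ≤ i.val) (fun v => Iff.rfl) (i.val + 1)
          (by omega) (fun x _ => by omega)
      have hsub : insert j (insert k L) ⊆ U := by
        intro p hp
        simp only [Finset.mem_insert, hL, Finset.mem_filter, Finset.mem_univ, true_and] at hp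
        simp only [hU, Finset.mem_filter, Finset.mem_univ, true_and]
        have hσi : n ≤ (σ i : ℕ) + i.val + 2 := hfam i
        rcases hp with rfl | rfl | hp
        · have := Fin.lt_def.mp hσij; omega
        · have := Fin.lt_def.mp hσik; omega
        · have := hfam p; omega
      have hcard3 : (insert j (insert k L)).card = i.val + 3 := by
        have h1 : i.val < j.val := Fin.lt_def.mp hij
        have h2 : j.val < k.val := Fin.lt_def.mp hjk
        rw [Finset.card_insert_of_notMem, Finset.card_insert_of_notMem, hLcard]
        · simp only [hL, Finset.mem_filter, Finset.mem_univ, true_and, not_le]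
          omega
        · simp only [Finset.mem_insert, hL, Finset.mem_filter, Finset.mem_univ, true_and, not_or,
            not_le]
          exact ⟨fun h => by rw [h] at hjk; exact absurd hjk (lt_irrefl _), by omega⟩
      have := Finset.card_le_card hsub
      omega

lemma avoids213_iff (σ : Equiv.Perm (Fin n)) :
    (Avoids σ p123 ∧ Avoids σ p213) ↔ ∀ i : Fin n, (σ i : ℕ) + i.val ≤ n := by
  constructor
  · intro ⟨h123, h213⟩
    by_contra hc
    push_neg at hc
    obtain ⟨k0, hk0⟩ := hc
    -- σ k0 + k0 ≥ n + 1
    set W := Finset.univ.filter (fun p : Fin n => p < k0 ∧ σ p < σ k0) with hW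
    have hWcard : 2 ≤ W.card := by
      have hbig : (Finset.univ.filter (fun p : Fin n => σ p < σ k0)).card
          = (σ k0 : ℕ) :=
        card_filter_perm_fin_lt (σ := σ) (Q := fun x => x < (σ k0 : ℕ))
          (fun p => by rw [Fin.lt_def]) ((σ k0 : ℕ)) (by have := (σ k0).isLt; omega)
          (fun x _ => Iff.rfl)
      set Wbig := Finset.univ.filter (fun p : Fin n => σ p < σ k0) with hWbig
      have hsplit := Finset.card_sdiff_add_card_inter Wbig
        (Finset.univ.filter (fun p : Fin n => k0.val ≤ p.val))
      have hsub1 : Wbig \ (Finset.univ.filter (fun p : Fin n => k0.val ≤ p.val)) ⊆ W := by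
        intro p hp
        rw [Finset.mem_sdiff, hWbig, Finset.mem_filter, Finset.mem_filter] at hp
        rw [hW, Finset.mem_filter]
        refine ⟨Finset.mem_univ _, ?_, hp.1.2⟩
        have hnot : ¬ (k0.val ≤ p.val) := by
          intro hle
          exact hp.2 ⟨Finset.mem_univ p, hle⟩
        rw [Fin.lt_def]
        omega
      have hsub2 : Wbig ∩ (Finset.univ.filter (fun p : Fin n => k0.val ≤ p.val)) ⊆
          (Finset.univ.filter (fun p : Fin n => k0.val ≤ p.val)).erase k0 := by
        intro p hp
        simp only [Finset.mem_inter, Finset.mem_filter, Finset.mem_univ, true_and, hWbig] at hp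
        rw [Finset.mem_erase]
        refine ⟨?_, by simp only [Finset.mem_filter, Finset.mem_univ, true_and]; exact hp.2⟩
        intro h
        rw [h] at hp
        exact absurd hp.1 (lt_irrefl _)
      have hcard2 : (Finset.univ.filter (fun p : Fin n => k0.val ≤ p.val)).card = n - k0.val :=
        card_filter_fin' (Q := fun x => k0.val ≤ x) (fun v => Iff.rfl) k0.val
          (by have := k0.isLt; omega) (fun x _ => Iff.rfl)
      have h1 := Finset.card_le_card hsub1
      have h2 := Finset.card_le_card hsub2
      rw [Finset.card_erase_of_mem (by simp), hcard2] at h2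
      rw [hbig] at hsplit
      have hk0lt := k0.isLt
      have hσk0lt := (σ k0).isLt
      omega
    obtain ⟨a, ha, b, hb, hab'⟩ := Finset.one_lt_card.mp hWcard
    simp only [hW, Finset.mem_filter, Finset.mem_univ, true_and] at ha hb
    have key : ∀ a b : Fin n, (a < k0 ∧ σ a < σ k0) → (b < k0 ∧ σ b < σ k0) → a < b → False := by
      intro a b ha hb hab
      have h1 : (σ a).val < (σ k0).val := Fin.lt_def.mp ha.2
      have h2 : (σ b).val < (σ k0).val := Fin.lt_def.mp hb.2
      have hne : (σ a).val ≠ (σ b).val := fun h => by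
        have : a = b := σ.injective (Fin.ext h)
        rw [this] at hab; exact absurd hab (lt_irrefl _)
      rcases Nat.lt_or_ge (σ a).val (σ b).val with h3 | h3
      · apply h123
        apply contains_of σ p123 hab hb.1
        apply iff3 σ p123 a b k0
        · exact iff_of_true (Fin.lt_def.mpr h3) (by norm_num [p123])
        · exact iff_of_true ha.2 (by decide)
        · exact iff_of_true hb.2 (by decide)
        · exact iff_of_false (by rw [Fin.lt_def]; omega) (by norm_num [p123])
        · exact iff_of_false (by rw [Fin.lt_def]; omega) (by decide)
        · exact iff_of_false (by rw [Fin.lt_def]; omega) (by decide)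
      · have h3' : (σ b).val < (σ a).val := by omega
        apply h213
        apply contains_of σ p213 hab hb.1
        apply iff3 σ p213 a b k0
        · exact iff_of_false (by rw [Fin.lt_def]; omega) (by norm_num [p213])
        · exact iff_of_true ha.2 (by decide)
        · exact iff_of_true hb.2 (by decide)
        · exact iff_of_true (Fin.lt_def.mpr h3') (by norm_num [p213])
        · exact iff_of_false (by rw [Fin.lt_def]; omega) (by decide)
        · exact iff_of_false (by rw [Fin.lt_def]; omega) (by decide)
    rcases lt_trichotomy a b with h | h | h
    · exact key a b ha hb h
    · exact hab' h
    · exact key b a hb ha h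
  · intro hfam
    constructor <;> rintro ⟨f, hmono, hiff⟩ <;>
    · set i := f 0 with hidef
      set j := f 1 with hjdef
      set k := f 2 with hkdef
      have hij : i < j := hmono (show (0 : Fin 3) < 1 by decide)
      have hjk : j < k := hmono (show (1 : Fin 3) < 2 by decide)
      have hσik : σ i < σ k := by
        rw [hidef, hkdef, hiff]; decide
      have hσjk : σ j < σ k := by
        rw [hjdef, hkdef, hiff]; decide
      have hkval : 2 ≤ k.val ∧ k.val < n := by
        have h1 : i.val < j.val := Fin.lt_def.mp hij
        have h2 : j.val < k.val := Fin.lt_def.mp hjk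
        exact ⟨by omega, k.isLt⟩
      set U := Finset.univ.filter (fun p : Fin n => (σ p).val < n - k.val + 1) with hU
      have hUcard : U.card = n - k.val + 1 :=
        card_filter_perm_fin_lt (σ := σ) (Q := fun x => x < n - k.val + 1)
          (fun p => Iff.rfl) (n - k.val + 1) (by omega) (fun x _ => Iff.rfl)
      set H := (Finset.univ.filter (fun p : Fin n => k.val ≤ p.val)) with hH
      have hHcard : H.card = n - k.val :=
        card_filter_fin' (Q := fun x => k.val ≤ x) (fun v => Iff.rfl) k.val
          (by omega) (fun x _ => Iff.rfl)
      have hσk : (σ k : ℕ) + k.val ≤ n := hfam k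
      have hsub : insert i (insert j H) ⊆ U := by
        intro p hp
        simp only [Finset.mem_insert, hH, Finset.mem_filter, Finset.mem_univ, true_and] at hp
        simp only [hU, Finset.mem_filter, Finset.mem_univ, true_and]
        rcases hp with rfl | rfl | hp
        · have := Fin.lt_def.mp hσik; omega
        · have := Fin.lt_def.mp hσjk; omega
        · have := hfam p; omega
      have hcard3 : (insert i (insert j H)).card = n - k.val + 2 := by
        have h1 : i.val < j.val := Fin.lt_def.mp hij
        have h2 : j.val < k.val := Fin.lt_def.mp hjk
        rw [Finset.card_insert_of_notMem, Finset.card_insert_of_notMem, hHcard]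
        · simp only [hH, Finset.mem_filter, Finset.mem_univ, true_and, not_le]
          omega
        · simp only [Finset.mem_insert, hH, Finset.mem_filter, Finset.mem_univ, true_and, not_or,
            not_le]
          exact ⟨fun h => by rw [h] at hij; exact absurd hij (lt_irrefl _), by omega⟩
      have := Finset.card_le_card hsub
      omega


end Char

noncomputable def crs' {n : ℕ} (σ : Equiv.Perm (Fin n)) : ℕ :=
  (Finset.univ.filter (fun p : Fin n × Fin n =>
    (σ p.1 < σ p.2 ∧ σ p.2 < p.1 ∧ p.1 < p.2) ∨
    (p.1 < p.2 ∧ p.2 ≤ σ p.1 ∧ σ p.1 < σ p.2))).card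

noncomputable def TA (n : ℕ) (S : Finset ℕ) : Finset ℕ :=
  S.filter (fun i => (¬ ∀ j, i ≤ j → j + i + 3 ≤ n → j ∈ S) ∨
    (¬ ∀ j, j ≤ i → n ≤ j + i + 2 → j ∈ S))

noncomputable def TB (n : ℕ) (S : Finset ℕ) : Finset ℕ :=
  S.filter (fun i => (¬ ∀ j, i ≤ j → j + i + 2 ≤ n → j ∈ S) ∨
    (¬ ∀ j, j ≤ i → n ≤ j + i + 1 → j ∈ S))

section Cross
variable {n : ℕ}

/-- ascents of permS are precisely at run ends -/
lemma pval_asc (S : Finset ℕ) (hS : S ⊆ Finset.range (n-1)) {i j : ℕ}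
    (hi : i < n) (hj : j < n) (hij : i < j)
    (hlt : pval n S i < pval n S j) :
    i ∈ S ∧ j ∉ S ∧ aS S j ≤ i := by
  have hai := aS_le S i
  have haj := aS_le S j
  unfold pval at hlt
  by_cases hiS : i ∈ S <;> by_cases hjS : j ∈ S
  · have h1 : i < n - 1 := Finset.mem_range.mp (hS hiS)
    have h2 : j < n - 1 := Finset.mem_range.mp (hS hjS)
    rw [if_pos hiS, if_pos hjS] at hlt
    omega
  · rw [if_pos hiS, if_neg hjS] at hlt
    have h1 : i < n - 1 := Finset.mem_range.mp (hS hiS)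
    refine ⟨hiS, hjS, ?_⟩
    omega
  · rw [if_neg hiS, if_pos hjS] at hlt
    have h2 : j < n - 1 := Finset.mem_range.mp (hS hjS)
    omega
  · rw [if_neg hiS, if_neg hjS] at hlt
    have haij : i < aS S j := by
      by_contra hcon
      exact hiS (aS_spec S j i (by omega) hij)
    omega

lemma runs_of_aS_le (S : Finset ℕ) {i j : ℕ} (hij : i < j) (h : aS S j ≤ i) :
    ∀ x, i ≤ x → x < j → x ∈ S := fun x hx1 hx2 => aS_spec S j x (by omega) hx2

/-- uniqueness of the partner -/
lemma partner_unique (S : Finset ℕ) {i j j' : ℕ} (hij : i < j) (hij' : i < j')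
    (hj : j ∉ S) (hj' : j' ∉ S) (ha : aS S j ≤ i) (ha' : aS S j' ≤ i) : j = j' := by
  rcases lt_trichotomy j j' with h | h | h
  · exact absurd (runs_of_aS_le S hij' ha' j (by omega) h) hj
  · exact h
  · exact absurd (runs_of_aS_le S hij ha j' (by omega) h) hj'

lemma crs_permS (S : Finset ℕ) (hS : S ⊆ Finset.range (n-1)) :
    crs (permS n S) = (TA n S).card := by
  set σ := permS n S with hσ
  have hval : ∀ i : Fin n, (σ i : ℕ) = pval n S i.val := fun i => permS_val S hS i
  unfold crs TA
  apply Finset.card_bij (i := fun p _ => p.1.val)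
  · -- maps into TA
    intro p hp
    simp only [Finset.mem_filter, Finset.mem_univ, true_and] at hp
    have hij : p.1.val < p.2.val ∧ (σ p.1 : ℕ) < (σ p.2 : ℕ) := by
      rcases hp with ⟨h1, _, h3⟩ | ⟨h1, _, h3⟩
      · exact ⟨Fin.lt_def.mp h1, Fin.lt_def.mp h3⟩
      · exact ⟨Fin.lt_def.mp h3, Fin.lt_def.mp h1⟩
    have hasc := pval_asc S hS p.1.isLt p.2.isLt hij.1
      (by rw [← hval, ← hval]; exact hij.2)
    obtain ⟨hiS, hjS, ha⟩ := hasc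
    have hi1 : p.1.val < n - 1 := Finset.mem_range.mp (hS hiS)
    rw [Finset.mem_filter]
    refine ⟨hiS, ?_⟩
    rcases hp with ⟨_, h2, _⟩ | ⟨_, h2, _⟩
    · -- type 1 : p.2 < σ p.1 = n - 2 - p.1
      left
      intro hall
      have h2v : p.2.val < pval n S p.1.val := by
        rw [← hval]; exact Fin.lt_def.mp h2
      unfold pval at h2v
      rw [if_pos hiS] at h2v
      exact hjS (hall p.2.val (by omega) (by omega))
    · -- type 2 : σ p.2 ≤ p.1, σ p.2 = n - 1 - aS S p.2
      right
      intro hall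
      have h2v : pval n S p.2.val ≤ p.1.val := by
        rw [← hval]; exact Fin.le_def.mp h2
      unfold pval at h2v
      rw [if_neg hjS] at h2v
      have haj := aS_le S p.2.val
      have hges : n - 1 - p.1.val ≤ aS S p.2.val := by omega
      have h1le : 1 ≤ aS S p.2.val := by omega
      have := aS_pred S p.2.val h1le
      exact this (hall (aS S p.2.val - 1) (by omega) (by omega))
  · -- injective
    intro p hp q hq hpq
    simp only [Finset.mem_filter, Finset.mem_univ, true_and] at hp hq
    have hijp : p.1.val < p.2.val ∧ (σ p.1 : ℕ) < (σ p.2 : ℕ) := by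
      rcases hp with ⟨h1, _, h3⟩ | ⟨h1, _, h3⟩
      · exact ⟨Fin.lt_def.mp h1, Fin.lt_def.mp h3⟩
      · exact ⟨Fin.lt_def.mp h3, Fin.lt_def.mp h1⟩
    have hijq : q.1.val < q.2.val ∧ (σ q.1 : ℕ) < (σ q.2 : ℕ) := by
      rcases hq with ⟨h1, _, h3⟩ | ⟨h1, _, h3⟩
      · exact ⟨Fin.lt_def.mp h1, Fin.lt_def.mp h3⟩
      · exact ⟨Fin.lt_def.mp h3, Fin.lt_def.mp h1⟩
    have hap := pval_asc S hS p.1.isLt p.2.isLt hijp.1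
      (by rw [← hval, ← hval]; exact hijp.2)
    have haq := pval_asc S hS q.1.isLt q.2.isLt hijq.1
      (by rw [← hval, ← hval]; exact hijq.2)
    have h2 : p.2.val = q.2.val := by
      apply partner_unique S (hijp.1) (hpq ▸ hijq.1) hap.2.1 haq.2.1 hap.2.2
      rw [hpq]
      exact haq.2.2
    exact Prod.ext (Fin.ext hpq) (Fin.ext h2)
  · -- surjective
    intro i hi
    rw [Finset.mem_filter] at hi
    obtain ⟨hiS, hdisj⟩ := hi
    have hi1 : i < n - 1 := Finset.mem_range.mp (hS hiS)
    have hex : ∃ j, i < j ∧ j ∉ S := ⟨n - 1, by omega, fun h => by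
      have := Finset.mem_range.mp (hS h); omega⟩
    set J := Nat.find hex with hJ
    obtain ⟨hJ1, hJ2⟩ := Nat.find_spec hex
    have hJle : J ≤ n - 1 := Nat.find_min' hex ⟨by omega, fun h => by
      have := Finset.mem_range.mp (hS h); omega⟩
    have hrun : ∀ x, i ≤ x → x < J → x ∈ S := by
      intro x hx1 hx2
      rcases Nat.eq_or_lt_of_le hx1 with rfl | h
      · exact hiS
      · have hmin := Nat.find_min hex hx2
        push_neg at hmin
        exact hmin h
    have haJ : aS S J ≤ i := aS_min S J (fun x hx1 hx2 => hrun x hx1 hx2)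
    refine ⟨(⟨i, by omega⟩, ⟨J, by omega⟩), ?_, rfl⟩
    simp only [Finset.mem_filter, Finset.mem_univ, true_and]
    have hv1 : (σ ⟨i, by omega⟩ : ℕ) = n - 2 - i := by
      rw [hval]
      unfold pval
      simp only [Fin.val_mk]
      rw [if_pos hiS]
    have hv2 : (σ ⟨J, by omega⟩ : ℕ) = n - 1 - aS S J := by
      rw [hval]
      unfold pval
      simp only [Fin.val_mk]
      rw [if_neg hJ2]
    rcases hdisj with h | h
    · -- type 1
      push_neg at h
      obtain ⟨j0, hj01, hj02, hj03⟩ := h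
      have hij0 : i < j0 := by
        rcases Nat.eq_or_lt_of_le hj01 with rfl | h'
        · exact absurd hiS hj03
        · exact h'
      have hJj0 : J ≤ j0 := Nat.find_min' hex ⟨hij0, hj03⟩
      left
      refine ⟨Fin.lt_def.mpr (by simp; omega), ?_, ?_⟩
      · rw [Fin.lt_def, hv1]
        simp only [Fin.val_mk]
        omega
      · rw [Fin.lt_def, hv1, hv2]
        omega
    · -- type 2
      push_neg at h
      obtain ⟨j0, hj01, hj02, hj03⟩ := h
      have haJ2 : j0 < aS S J := by
        by_contra hcon
        exact hj03 (aS_spec S J j0 (by omega) (by omega))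
      right
      refine ⟨?_, ?_, Fin.lt_def.mpr (by simp; omega)⟩
      · rw [Fin.lt_def, hv1, hv2]
        omega
      · rw [Fin.le_def, hv2]
        simp only [Fin.val_mk]
        omega
lemma crs'_permS (S : Finset ℕ) (hS : S ⊆ Finset.range (n-1)) :
    crs' (permS n S) = (TB n S).card := by
  set σ := permS n S with hσ
  have hval : ∀ i : Fin n, (σ i : ℕ) = pval n S i.val := fun i => permS_val S hS i
  unfold crs' TB
  apply Finset.card_bij (i := fun p _ => p.1.val)
  · -- maps into TB
    intro p hp
    simp only [Finset.mem_filter, Finset.mem_univ, true_and] at hp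
    have hij : p.1.val < p.2.val ∧ (σ p.1 : ℕ) < (σ p.2 : ℕ) := by
      rcases hp with ⟨h1, _, h3⟩ | ⟨h1, _, h3⟩
      · exact ⟨Fin.lt_def.mp h3, Fin.lt_def.mp h1⟩
      · exact ⟨Fin.lt_def.mp h1, Fin.lt_def.mp h3⟩
    have hasc := pval_asc S hS p.1.isLt p.2.isLt hij.1
      (by rw [← hval, ← hval]; exact hij.2)
    obtain ⟨hiS, hjS, ha⟩ := hasc
    have hi1 : p.1.val < n - 1 := Finset.mem_range.mp (hS hiS)
    rw [Finset.mem_filter]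
    refine ⟨hiS, ?_⟩
    rcases hp with ⟨_, h2, _⟩ | ⟨_, h2, _⟩
    · -- type 1' : σ p.2 < p.1, σ p.2 = n - 1 - aS S p.2
      right
      intro hall
      have h2v : pval n S p.2.val < p.1.val := by
        rw [← hval]; exact Fin.lt_def.mp h2
      unfold pval at h2v
      rw [if_neg hjS] at h2v
      have haj := aS_le S p.2.val
      have hges : n - p.1.val ≤ aS S p.2.val := by omega
      have h1le : 1 ≤ aS S p.2.val := by omega
      have := aS_pred S p.2.val h1le
      exact this (hall (aS S p.2.val - 1) (by omega) (by omega))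
    · -- type 2' : p.2 ≤ σ p.1 = n - 2 - p.1
      left
      intro hall
      have h2v : p.2.val ≤ pval n S p.1.val := by
        rw [← hval]; exact Fin.le_def.mp h2
      unfold pval at h2v
      rw [if_pos hiS] at h2v
      exact hjS (hall p.2.val (by omega) (by omega))
  · -- injective
    intro p hp q hq hpq
    simp only [Finset.mem_filter, Finset.mem_univ, true_and] at hp hq
    have hijp : p.1.val < p.2.val ∧ (σ p.1 : ℕ) < (σ p.2 : ℕ) := by
      rcases hp with ⟨h1, _, h3⟩ | ⟨h1, _, h3⟩
      · exact ⟨Fin.lt_def.mp h3, Fin.lt_def.mp h1⟩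
      · exact ⟨Fin.lt_def.mp h1, Fin.lt_def.mp h3⟩
    have hijq : q.1.val < q.2.val ∧ (σ q.1 : ℕ) < (σ q.2 : ℕ) := by
      rcases hq with ⟨h1, _, h3⟩ | ⟨h1, _, h3⟩
      · exact ⟨Fin.lt_def.mp h3, Fin.lt_def.mp h1⟩
      · exact ⟨Fin.lt_def.mp h1, Fin.lt_def.mp h3⟩
    have hap := pval_asc S hS p.1.isLt p.2.isLt hijp.1
      (by rw [← hval, ← hval]; exact hijp.2)
    have haq := pval_asc S hS q.1.isLt q.2.isLt hijq.1
      (by rw [← hval, ← hval]; exact hijq.2)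
    have h2 : p.2.val = q.2.val := by
      apply partner_unique S (hijp.1) (hpq ▸ hijq.1) hap.2.1 haq.2.1 hap.2.2
      rw [hpq]
      exact haq.2.2
    exact Prod.ext (Fin.ext hpq) (Fin.ext h2)
  · -- surjective
    intro i hi
    rw [Finset.mem_filter] at hi
    obtain ⟨hiS, hdisj⟩ := hi
    have hi1 : i < n - 1 := Finset.mem_range.mp (hS hiS)
    have hex : ∃ j, i < j ∧ j ∉ S := ⟨n - 1, by omega, fun h => by
      have := Finset.mem_range.mp (hS h); omega⟩
    set J := Nat.find hex with hJ
    obtain ⟨hJ1, hJ2⟩ := Nat.find_spec hex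
    have hJle : J ≤ n - 1 := Nat.find_min' hex ⟨by omega, fun h => by
      have := Finset.mem_range.mp (hS h); omega⟩
    have hrun : ∀ x, i ≤ x → x < J → x ∈ S := by
      intro x hx1 hx2
      rcases Nat.eq_or_lt_of_le hx1 with rfl | h
      · exact hiS
      · have hmin := Nat.find_min hex hx2
        push_neg at hmin
        exact hmin h
    have haJ : aS S J ≤ i := aS_min S J (fun x hx1 hx2 => hrun x hx1 hx2)
    refine ⟨(⟨i, by omega⟩, ⟨J, by omega⟩), ?_, rfl⟩
    simp only [Finset.mem_filter, Finset.mem_univ, true_and]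
    have hv1 : (σ ⟨i, by omega⟩ : ℕ) = n - 2 - i := by
      rw [hval]
      unfold pval
      simp only [Fin.val_mk]
      rw [if_pos hiS]
    have hv2 : (σ ⟨J, by omega⟩ : ℕ) = n - 1 - aS S J := by
      rw [hval]
      unfold pval
      simp only [Fin.val_mk]
      rw [if_neg hJ2]
    rcases hdisj with h | h
    · -- witness in [i, n-2-i] missing : type 2'
      push_neg at h
      obtain ⟨j0, hj01, hj02, hj03⟩ := h
      have hij0 : i < j0 := by
        rcases Nat.eq_or_lt_of_le hj01 with rfl | h'
        · exact absurd hiS hj03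
        · exact h'
      have hJj0 : J ≤ j0 := Nat.find_min' hex ⟨hij0, hj03⟩
      right
      refine ⟨Fin.lt_def.mpr (by simp; omega), ?_, ?_⟩
      · rw [Fin.le_def, hv1]
        simp only [Fin.val_mk]
        omega
      · rw [Fin.lt_def, hv1, hv2]
        omega
    · -- witness in [n-1-i, i] missing : type 1'
      push_neg at h
      obtain ⟨j0, hj01, hj02, hj03⟩ := h
      have haJ2 : j0 < aS S J := by
        by_contra hcon
        exact hj03 (aS_spec S J j0 (by omega) (by omega))
      left
      refine ⟨?_, ?_, Fin.lt_def.mpr (by simp; omega)⟩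
      · rw [Fin.lt_def, hv1, hv2]
        omega
      · rw [Fin.lt_def, hv2]
        simp only [Fin.val_mk]
        omega

end Cross

section RC
variable {n : ℕ}

noncomputable def rcP (n : ℕ) (σ : Equiv.Perm (Fin n)) : Equiv.Perm (Fin n) :=
  (Fin.revPerm : Equiv.Perm (Fin n)).trans (σ.trans Fin.revPerm)

lemma rcP_apply (σ : Equiv.Perm (Fin n)) (x : Fin n) :
    rcP n σ x = (σ x.rev).rev := rfl

lemma rcP_rcP (σ : Equiv.Perm (Fin n)) : rcP n (rcP n σ) = σ := by
  apply Equiv.ext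
  intro x
  simp [rcP_apply, Fin.rev_rev]

lemma crs_rcP (σ : Equiv.Perm (Fin n)) : crs σ = crs' (rcP n σ) := by
  unfold crs crs'
  apply Finset.card_bij (i := fun p _ => ((p.2.rev : Fin n), (p.1.rev : Fin n)))
  · intro p hp
    simp only [Finset.mem_filter, Finset.mem_univ, true_and] at hp ⊢
    rcases hp with ⟨h1, h2, h3⟩ | ⟨h1, h2, h3⟩
    · left
      simp only [rcP_apply, Fin.rev_rev]
      exact ⟨Fin.rev_lt_rev.mpr h3, Fin.rev_lt_rev.mpr h2, Fin.rev_lt_rev.mpr h1⟩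
    · right
      simp only [rcP_apply, Fin.rev_rev]
      exact ⟨Fin.rev_lt_rev.mpr h3, Fin.rev_le_rev.mpr h2, Fin.rev_lt_rev.mpr h1⟩
  · intro p _ q _ h
    simp only [Prod.mk.injEq] at h
    have h1 : p.1 = q.1 := by
      have := congrArg Fin.rev h.2; simpa [Fin.rev_rev] using this
    have h2 : p.2 = q.2 := by
      have := congrArg Fin.rev h.1; simpa [Fin.rev_rev] using this
    exact Prod.ext h1 h2
  · intro q hq
    refine ⟨(q.2.rev, q.1.rev), ?_, by simp [Fin.rev_rev]⟩
    simp only [Finset.mem_filter, Finset.mem_univ, true_and] at hq ⊢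
    simp only [rcP_apply, Fin.rev_rev] at hq ⊢
    have b1 := (σ q.1.rev).isLt
    have b2 := (σ q.2.rev).isLt
    have b3 := q.1.isLt
    have b4 := q.2.isLt
    rcases hq with ⟨h1, h2, h3⟩ | ⟨h1, h2, h3⟩
    · left
      rw [Fin.lt_def] at h1 h2 h3 ⊢
      rw [Fin.lt_def, Fin.lt_def]
      simp only [Fin.val_rev] at *
      omega
    · right
      rw [Fin.lt_def] at h1 h3
      rw [Fin.le_def] at h2
      rw [Fin.lt_def, Fin.le_def, Fin.lt_def]
      simp only [Fin.val_rev] at *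
      omega

lemma fam_rcP (σ : Equiv.Perm (Fin n)) :
    (∀ i : Fin n, (σ i : ℕ) + i.val ≤ n) ↔
    (∀ i : Fin n, n ≤ ((rcP n σ) i : ℕ) + i.val + 2) := by
  constructor
  · intro h i
    rw [rcP_apply, Fin.val_rev]
    have h1 := h i.rev
    rw [Fin.val_rev] at h1
    have := (σ i.rev).isLt
    have := i.isLt
    omega
  · intro h i
    have h1 := h i.rev
    rw [rcP_apply, Fin.rev_rev, Fin.val_rev, Fin.val_rev] at h1
    have := (σ i).isLt
    have := i.isLt
    omega

lemma card_rc (k : ℕ) :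
    (Finset.univ.filter (fun σ : Equiv.Perm (Fin n) =>
      (∀ i : Fin n, (σ i : ℕ) + i.val ≤ n) ∧ crs σ = k)).card =
    (Finset.univ.filter (fun ρ : Equiv.Perm (Fin n) =>
      (∀ i : Fin n, n ≤ (ρ i : ℕ) + i.val + 2) ∧ crs' ρ = k)).card := by
  apply Finset.card_bij (i := fun σ _ => rcP n σ)
  · intro σ hσ
    simp only [Finset.mem_filter, Finset.mem_univ, true_and] at hσ ⊢
    exact ⟨(fam_rcP σ).mp hσ.1, by rw [← crs_rcP]; exact hσ.2⟩
  · intro a _ b _ h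
    have := congrArg (rcP n) h
    rwa [rcP_rcP, rcP_rcP] at this
  · intro ρ hρ
    simp only [Finset.mem_filter, Finset.mem_univ, true_and] at hρ ⊢
    refine ⟨rcP n ρ, ⟨?_, ?_⟩, rcP_rcP ρ⟩
    · rw [fam_rcP, rcP_rcP]
      exact hρ.1
    · rw [crs_rcP, rcP_rcP]
      exact hρ.2
end RC

noncomputable def cA (m : ℕ) : ℕ → Finset ℕ := fun t => Finset.Ico (t/2) (m - (t+1)/2)
noncomputable def cB (m : ℕ) : ℕ → Finset ℕ := fun t => Finset.Ico ((t+1)/2) (m - t/2)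

section Chains
variable (m : ℕ)

lemma cA_zero : cA m 0 = Finset.range m := by
  unfold cA
  rw [show (0:ℕ)/2 = 0 from rfl, show m - (0+1)/2 = m from by omega, Finset.range_eq_Ico]

lemma cB_zero : cB m 0 = Finset.range m := by
  unfold cB
  rw [show (0+1:ℕ)/2 = 0 from rfl, show m - 0/2 = m from by omega, Finset.range_eq_Ico]

lemma cA_mono : ∀ t, cA m (t+1) ⊆ cA m t := by
  intro t
  unfold cA
  apply Finset.Ico_subset_Ico <;> omega

lemma cB_mono : ∀ t, cB m (t+1) ⊆ cB m t := by
  intro t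
  unfold cB
  apply Finset.Ico_subset_Ico <;> omega

lemma cA_card : ∀ t ≤ m, (cA m t).card = m - t := by
  intro t ht
  unfold cA
  rw [Nat.card_Ico]
  omega

lemma cB_card : ∀ t ≤ m, (cB m t).card = m - t := by
  intro t ht
  unfold cB
  rw [Nat.card_Ico]
  omega

lemma cA_ex : ∀ S : Finset ℕ, ∃ t, cA m t ⊆ S := by
  intro S
  refine ⟨2 * m, ?_⟩
  unfold cA
  have : Finset.Ico (2*m/2) (m - (2*m+1)/2) = ∅ := by
    rw [Finset.Ico_eq_empty_iff]
    omega
  rw [this]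
  exact Finset.empty_subset _

lemma cB_ex : ∀ S : Finset ℕ, ∃ t, cB m t ⊆ S := by
  intro S
  refine ⟨2 * m, ?_⟩
  unfold cB
  have : Finset.Ico ((2*m+1)/2) (m - 2*m/2) = ∅ := by
    rw [Finset.Ico_eq_empty_iff]
    omega
  rw [this]
  exact Finset.empty_subset _

end Chains

section Link
lemma mem_cA {m t x : ℕ} : x ∈ cA m t ↔ (t/2 ≤ x ∧ x < m - (t+1)/2) := by
  unfold cA; exact Finset.mem_Ico

lemma mem_cB {m t x : ℕ} : x ∈ cB m t ↔ ((t+1)/2 ≤ x ∧ x < m - t/2) := by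
  unfold cB; exact Finset.mem_Ico


variable {n : ℕ}

lemma linkA (hn : 1 ≤ n) (S : Finset ℕ) (hS : S ⊆ Finset.range (n-1)) :
    TA n S = S \ cA (n-1) (theta (cA (n-1)) (cA_ex (n-1)) S - 1) := by
  obtain ⟨θ, hθdef⟩ : ∃ x, theta (cA (n-1)) (cA_ex (n-1)) S = x := ⟨_, rfl⟩
  have hspec : cA (n-1) θ ⊆ S := hθdef ▸ Nat.find_spec (cA_ex (n-1) S)
  have hiff : ∀ t, θ ≤ t ↔ cA (n-1) t ⊆ S := by
    intro t
    rw [← hθdef]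
    exact theta_le_iff (cA_ex (n-1)) (cA_mono (n-1)) S t
  have hmin : 1 ≤ θ → ¬ (cA (n-1) (θ - 1) ⊆ S) := by
    intro h1 hsub
    exact absurd ((hiff (θ-1)).mpr hsub) (by omega)
  have hθm : θ ≤ n - 1 := by
    rw [hiff]
    intro x hx
    rw [mem_cA] at hx
    omega
  rw [hθdef, Finset.sdiff_eq_filter]
  unfold TA
  apply Finset.filter_congr
  intro i hiS
  have him : i < n - 1 := Finset.mem_range.mp (hS hiS)
  have e1 : (∀ j, i ≤ j → j + i + 3 ≤ n → j ∈ S) ↔ cA (n-1) (2*i+1) ⊆ S := by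
    constructor
    · intro h x hx
      rw [mem_cA] at hx
      exact h x (by omega) (by omega)
    · intro h j hj1 hj2
      apply h
      rw [mem_cA]
      omega
  have e2 : (∀ j, j ≤ i → n ≤ j + i + 2 → j ∈ S) ↔ cA (n-1) (2*(n-2-i)) ⊆ S := by
    constructor
    · intro h x hx
      rw [mem_cA] at hx
      exact h x (by omega) (by omega)
    · intro h j hj1 hj2
      apply h
      rw [mem_cA]
      omega
  have t1 : ¬ (cA (n-1) (2*i+1) ⊆ S) ↔ 2*i+1 < θ := by
    rw [← hiff]
    omega
  have t2 : ¬ (cA (n-1) (2*(n-2-i)) ⊆ S) ↔ 2*(n-2-i) < θ := by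
    rw [← hiff]
    omega
  rw [e1, e2, t1, t2]
  constructor
  · rintro (h | h) hmem
    · rw [mem_cA] at hmem
      have hθeq : θ = 2*i+2 := by omega
      obtain ⟨y, hy1, hy2⟩ := Finset.not_subset.mp (hmin (by omega))
      have hynot : y ∉ cA (n-1) θ := fun hc => hy2 (hspec hc)
      rw [mem_cA] at hy1
      rw [mem_cA] at hynot
      have : y = i := by omega
      subst this
      exact hy2 hiS
    · rw [mem_cA] at hmem
      have hθeq : θ = 2*(n-2-i)+1 := by omega
      obtain ⟨y, hy1, hy2⟩ := Finset.not_subset.mp (hmin (by omega))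
      have hynot : y ∉ cA (n-1) θ := fun hc => hy2 (hspec hc)
      rw [mem_cA] at hy1
      rw [mem_cA] at hynot
      have : y = i := by omega
      subst this
      exact hy2 hiS
  · intro h
    rw [mem_cA] at h
    push_neg at h
    by_cases hlow : i < (θ - 1)/2
    · left; omega
    · right
      have := h (by omega)
      omega

lemma linkB (hn : 1 ≤ n) (S : Finset ℕ) (hS : S ⊆ Finset.range (n-1)) :
    TB n S = S \ cB (n-1) (theta (cB (n-1)) (cB_ex (n-1)) S - 1) := by
  obtain ⟨θ, hθdef⟩ : ∃ x, theta (cB (n-1)) (cB_ex (n-1)) S = x := ⟨_, rfl⟩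
  have hspec : cB (n-1) θ ⊆ S := hθdef ▸ Nat.find_spec (cB_ex (n-1) S)
  have hiff : ∀ t, θ ≤ t ↔ cB (n-1) t ⊆ S := by
    intro t
    rw [← hθdef]
    exact theta_le_iff (cB_ex (n-1)) (cB_mono (n-1)) S t
  have hmin : 1 ≤ θ → ¬ (cB (n-1) (θ - 1) ⊆ S) := by
    intro h1 hsub
    exact absurd ((hiff (θ-1)).mpr hsub) (by omega)
  have hθm : θ ≤ n - 1 := by
    rw [hiff]
    intro x hx
    rw [mem_cB] at hx
    omega
  rw [hθdef, Finset.sdiff_eq_filter]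
  unfold TB
  apply Finset.filter_congr
  intro i hiS
  have him : i < n - 1 := Finset.mem_range.mp (hS hiS)
  have e1 : (∀ j, i ≤ j → j + i + 2 ≤ n → j ∈ S) ↔ cB (n-1) (2*i) ⊆ S := by
    constructor
    · intro h x hx
      rw [mem_cB] at hx
      exact h x (by omega) (by omega)
    · intro h j hj1 hj2
      apply h
      rw [mem_cB]
      omega
  have e2 : (∀ j, j ≤ i → n ≤ j + i + 1 → j ∈ S) ↔ cB (n-1) (2*(n-1-i)-1) ⊆ S := by
    constructor
    · intro h x hx
      rw [mem_cB] at hx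
      exact h x (by omega) (by omega)
    · intro h j hj1 hj2
      apply h
      rw [mem_cB]
      omega
  have t1 : ¬ (cB (n-1) (2*i) ⊆ S) ↔ 2*i < θ := by
    rw [← hiff]
    omega
  have t2 : ¬ (cB (n-1) (2*(n-1-i)-1) ⊆ S) ↔ 2*(n-1-i)-1 < θ := by
    rw [← hiff]
    omega
  rw [e1, e2, t1, t2]
  constructor
  · rintro (h | h) hmem
    · rw [mem_cB] at hmem
      have hθeq : θ = 2*i+1 := by omega
      obtain ⟨y, hy1, hy2⟩ := Finset.not_subset.mp (hmin (by omega))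
      have hynot : y ∉ cB (n-1) θ := fun hc => hy2 (hspec hc)
      rw [mem_cB] at hy1
      rw [mem_cB] at hynot
      have : y = i := by omega
      subst this
      exact hy2 hiS
    · rw [mem_cB] at hmem
      have hθeq : θ = 2*(n-1-i) := by omega
      obtain ⟨y, hy1, hy2⟩ := Finset.not_subset.mp (hmin (by omega))
      have hynot : y ∉ cB (n-1) θ := fun hc => hy2 (hspec hc)
      rw [mem_cB] at hy1
      rw [mem_cB] at hynot
      have : y = i := by omega
      subst this
      exact hy2 hiS
  · intro h
    rw [mem_cB] at h
    push_neg at h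
    by_cases hlow : i < θ/2
    · left; omega
    · right
      have := h (by omega)
      omega

end Link


section Main
variable {n : ℕ}

/-- generic transfer from permutation counting to subset counting -/
lemma card_fam (hn : 1 ≤ n) (k : ℕ) (crsX : Equiv.Perm (Fin n) → ℕ)
    (TX : Finset ℕ → Finset ℕ)
    (hX : ∀ S : Finset ℕ, S ⊆ Finset.range (n-1) → crsX (permS n S) = (TX S).card) :
    (Finset.univ.filter (fun σ : Equiv.Perm (Fin n) =>
        (∀ i : Fin n, n ≤ (σ i : ℕ) + i.val + 2) ∧ crsX σ = k)).card =
    (((Finset.range (n-1)).powerset).filter (fun S => (TX S).card = k)).card := by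
  apply Finset.card_bij' (i := fun σ _ => Sof n σ) (j := fun S _ => permS n S)
  · intro σ hσ
    simp only [Finset.mem_filter, Finset.mem_univ, true_and] at hσ
    rw [Finset.mem_filter, Finset.mem_powerset]
    refine ⟨Sof_subset σ, ?_⟩
    rw [← hX (Sof n σ) (Sof_subset σ), permS_Sof σ hσ.1]
    exact hσ.2
  · intro S hS'
    rw [Finset.mem_filter, Finset.mem_powerset] at hS'
    simp only [Finset.mem_filter, Finset.mem_univ, true_and]
    refine ⟨fun i => permS_fam S hS'.1 i, ?_⟩
    rw [hX S hS'.1]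
    exact hS'.2
  · intro σ hσ
    simp only [Finset.mem_filter, Finset.mem_univ, true_and] at hσ
    exact permS_Sof σ hσ.1
  · intro S hS'
    rw [Finset.mem_filter, Finset.mem_powerset] at hS'
    exact Sof_permS S hS'.1

end Main

theorem count_crossings_123 (n k : ℕ) (hn : 1 ≤ n) (τ : Fin 3 → ℕ)
    (hτ : τ = p132 ∨ τ = p213) :
    (Finset.univ.filter (fun σ : Equiv.Perm (Fin n) =>
        Avoids σ p123 ∧ Avoids σ τ ∧ crs σ = k)).card =
      (if k = 0 then 1 else 0) + Nat.choose (n - 1) (k + 1) := by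
  rcases hτ with rfl | rfl
  · -- the 132 case
    have step1 : (Finset.univ.filter (fun σ : Equiv.Perm (Fin n) =>
        Avoids σ p123 ∧ Avoids σ p132 ∧ crs σ = k)) =
        (Finset.univ.filter (fun σ : Equiv.Perm (Fin n) =>
        (∀ i : Fin n, n ≤ (σ i : ℕ) + i.val + 2) ∧ crs σ = k)) := by
      apply Finset.filter_congr
      intro σ _
      constructor
      · rintro ⟨h1, h2, h3⟩
        exact ⟨(avoids132_iff σ).mp ⟨h1, h2⟩, h3⟩
      · rintro ⟨h1, h2⟩
        obtain ⟨ha, hb⟩ := (avoids132_iff σ).mpr h1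
        exact ⟨ha, hb, h2⟩
    rw [step1, card_fam hn k crs (TA n) (fun S hS => crs_permS S hS)]
    have step2 : (((Finset.range (n-1)).powerset).filter (fun S => (TA n S).card = k)) =
        (((Finset.range (n-1)).powerset).filter (fun S =>
          (S \ cA (n-1) (theta (cA (n-1)) (cA_ex (n-1)) S - 1)).card = k)) := by
      apply Finset.filter_congr
      intro S hS
      rw [Finset.mem_powerset] at hS
      rw [linkA hn S hS]
    rw [step2]
    exact core_count k (cA_ex (n-1)) (cA_zero (n-1)) (cA_mono (n-1)) (cA_card (n-1))
  · -- the 213 case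
    have step1 : (Finset.univ.filter (fun σ : Equiv.Perm (Fin n) =>
        Avoids σ p123 ∧ Avoids σ p213 ∧ crs σ = k)) =
        (Finset.univ.filter (fun σ : Equiv.Perm (Fin n) =>
        (∀ i : Fin n, (σ i : ℕ) + i.val ≤ n) ∧ crs σ = k)) := by
      apply Finset.filter_congr
      intro σ _
      constructor
      · rintro ⟨h1, h2, h3⟩
        exact ⟨(avoids213_iff σ).mp ⟨h1, h2⟩, h3⟩
      · rintro ⟨h1, h2⟩
        obtain ⟨ha, hb⟩ := (avoids213_iff σ).mpr h1
        exact ⟨ha, hb, h2⟩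
    rw [step1, card_rc k, card_fam hn k crs' (TB n) (fun S hS => crs'_permS S hS)]
    have step2 : (((Finset.range (n-1)).powerset).filter (fun S => (TB n S).card = k)) =
        (((Finset.range (n-1)).powerset).filter (fun S =>
          (S \ cB (n-1) (theta (cB (n-1)) (cB_ex (n-1)) S - 1)).card = k)) := by
      apply Finset.filter_congr
      intro S hS
      rw [Finset.mem_powerset] at hS
      rw [linkB hn S hS]
    rw [step2]
    exact core_count k (cB_ex (n-1)) (cB_zero (n-1)) (cB_mono (n-1)) (cB_card (n-1))
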